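/- Let X be a finite set and f : X → ℝ^M. For a reference point r ∈ ℝ^M, define HV_r(P) as the Lebesgue measure of the union over y ∈ P of the boxes [r, y] = {z : r ≤ z ≤ y componentwise}, restricted to points y with y ≥ r. Then for any two functions f, g : X → ℝ^M with values componentwise ≥ r and bounded above by some u ∈ ℝ^M, |HV_r(f(X)) − HV_r(g(X))| ≤ M · (∏_{j} (u_j − r_j)) / (min_j (u_j − r_j)) · max_{x∈X} ||f(x) − g(x)||_∞, i.e., the hypervolume of the image set is Lipschitz in the function with an explicit constant. -/
import Mathlib


open MeasureTheory

/-- Dominated hypervolume with reference point `r`: Lebesgue measure of the union of the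
boxes `[r, y]` over points `y ∈ P` dominating `r`. -/
noncomputable def hypervolume {M : ℕ} (r : Fin M → ℝ) (P : Set (Fin M → ℝ)) : ℝ :=
  (volume (⋃ y ∈ {y ∈ P | r ≤ y}, Set.Icc r y)).toReal

open Set in
/-- One-sided key estimate: the union of boxes for `f` is contained in a translate of the
union of boxes for `g` together with `M` thin slabs. -/
lemma hv_key {X : Type*} {M : ℕ} (r u : Fin M → ℝ) (hru : ∀ j, r j ≤ u j) (ε : ℝ) (hε : 0 ≤ ε)
    (f g : X → (Fin M → ℝ)) (hf : ∀ x, f x ≤ u) (hg : ∀ x, r ≤ g x)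
    (hfg : ∀ x j, f x j - g x j ≤ ε) :
    volume (⋃ x, Icc r (f x)) ≤ volume (⋃ x, Icc r (g x)) +
      ∑ j : Fin M, ENNReal.ofReal (ε * ∏ k ∈ Finset.univ.erase j, (u k - r k)) := by
  have hincl : (⋃ x, Icc r (f x)) ⊆
      ((fun z => (fun _ => -ε : Fin M → ℝ) + z) ⁻¹' (⋃ x, Icc r (g x))) ∪
        ⋃ j : Fin M, Icc r (Function.update u j (min (u j) (r j + ε))) := by
    intro z hz
    simp only [mem_iUnion, mem_Icc] at hz
    obtain ⟨x, hrz, hzf⟩ := hz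
    by_cases h : ∀ k, r k + ε ≤ z k
    · left
      simp only [mem_preimage, mem_iUnion, mem_Icc]
      refine ⟨x, fun k => ?_, fun k => ?_⟩
      · have := h k; simp only [Pi.add_apply]; linarith
      · have h1 := hzf k; have h2 := hfg x k; simp only [Pi.add_apply]; linarith
    · right
      push_neg at h
      obtain ⟨j, hj⟩ := h
      simp only [mem_iUnion, mem_Icc]
      refine ⟨j, hrz, fun i => ?_⟩
      rcases eq_or_ne i j with rfl | hij
      · rw [Function.update_self]
        exact le_min ((hzf i).trans (hf x i)) (le_of_lt hj)
      · rw [Function.update_of_ne hij]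
        exact (hzf i).trans (hf x i)
  calc volume (⋃ x, Icc r (f x))
      ≤ volume (((fun z => (fun _ => -ε : Fin M → ℝ) + z) ⁻¹' (⋃ x, Icc r (g x))) ∪
        ⋃ j : Fin M, Icc r (Function.update u j (min (u j) (r j + ε)))) :=
        measure_mono hincl
    _ ≤ volume ((fun z => (fun _ => -ε : Fin M → ℝ) + z) ⁻¹' (⋃ x, Icc r (g x))) +
        volume (⋃ j : Fin M, Icc r (Function.update u j (min (u j) (r j + ε)))) :=
        measure_union_le _ _
    _ ≤ volume (⋃ x, Icc r (g x)) +
        ∑ j : Fin M, ENNReal.ofReal (ε * ∏ k ∈ Finset.univ.erase j, (u k - r k)) := by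
        refine add_le_add (le_of_eq (measure_preimage_add _ _ _)) ?_
        refine le_trans (measure_iUnion_le _) ?_
        rw [tsum_fintype]
        refine Finset.sum_le_sum fun j _ => ?_
        rw [Real.volume_Icc_pi]
        rw [← Finset.prod_erase_mul _ _ (Finset.mem_univ j), Function.update_self]
        have hprodnn : (0 : ℝ) ≤ ∏ k ∈ Finset.univ.erase j, (u k - r k) :=
          Finset.prod_nonneg fun k _ => sub_nonneg.2 (hru k)
        have hprod : ∏ k ∈ Finset.univ.erase j,
            ENNReal.ofReal (Function.update u j (min (u j) (r j + ε)) k - r k)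
            = ENNReal.ofReal (∏ k ∈ Finset.univ.erase j, (u k - r k)) := by
          rw [ENNReal.ofReal_prod_of_nonneg (fun k _ => sub_nonneg.2 (hru k))]
          refine Finset.prod_congr rfl fun k hk => ?_
          rw [Function.update_of_ne (Finset.mem_erase.1 hk).1]
        rw [hprod, ← ENNReal.ofReal_mul hprodnn]
        refine ENNReal.ofReal_le_ofReal ?_
        have h1 : min (u j) (r j + ε) - r j ≤ ε := by
          have := min_le_right (u j) (r j + ε); linarith
        calc (∏ k ∈ Finset.univ.erase j, (u k - r k)) * (min (u j) (r j + ε) - r j)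
            ≤ (∏ k ∈ Finset.univ.erase j, (u k - r k)) * ε :=
              mul_le_mul_of_nonneg_left h1 hprodnn
          _ = ε * ∏ k ∈ Finset.univ.erase j, (u k - r k) := mul_comm _ _

open Set in
lemma hv_eq {X : Type*} {M : ℕ} (r : Fin M → ℝ) (f : X → (Fin M → ℝ)) (hf : ∀ x, r ≤ f x) :
    hypervolume r (Set.range f) = (volume (⋃ x, Icc r (f x))).toReal := by
  unfold hypervolume
  congr 2
  have hset : {y ∈ Set.range f | r ≤ y} = Set.range f := by
    ext y
    refine ⟨fun h => h.1, fun h => ⟨h, ?_⟩⟩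
    obtain ⟨x, rfl⟩ := h
    exact hf x
  rw [hset, Set.biUnion_range]

/-- For `f, g : X → ℝ^M` on a finite nonempty `X` with values in `[r, u]`
componentwise, the hypervolume of the image set is Lipschitz in the function:
`|HV_r(f(X)) − HV_r(g(X))| ≤ M * (∏_j (u_j − r_j)) / (min_j (u_j − r_j)) * max_x ‖f x − g x‖_∞`. -/
theorem stmt8 {X : Type*} [Fintype X] [Nonempty X] {M : ℕ} [NeZero M]
    (r u : Fin M → ℝ) (hru : ∀ j, r j < u j)
    (f g : X → (Fin M → ℝ))
    (hf : ∀ x, r ≤ f x ∧ f x ≤ u) (hg : ∀ x, r ≤ g x ∧ g x ≤ u) :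
    |hypervolume r (Set.range f) - hypervolume r (Set.range g)| ≤
      (M : ℝ) * (∏ j, (u j - r j)) / (Finset.univ.inf' Finset.univ_nonempty
          (fun j => u j - r j)) *
        Finset.univ.sup' Finset.univ_nonempty (fun x => ‖f x - g x‖) := by
  classical
  set ε : ℝ := Finset.univ.sup' Finset.univ_nonempty (fun x => ‖f x - g x‖) with hεdef
  set m : ℝ := Finset.univ.inf' Finset.univ_nonempty (fun j => u j - r j) with hmdef
  have hru' : ∀ j, r j ≤ u j := fun j => (hru j).le
  have hε : 0 ≤ ε := le_trans (norm_nonneg (f (Classical.arbitrary X) - g (Classical.arbitrary X)))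
    (Finset.le_sup' (fun x => ‖f x - g x‖) (Finset.mem_univ (Classical.arbitrary X)))
  have hm : 0 < m := by
    rw [hmdef, Finset.lt_inf'_iff]
    exact fun j _ => sub_pos.2 (hru j)
  have hfg : ∀ x j, f x j - g x j ≤ ε := by
    intro x j
    have h1 : ‖(f x - g x) j‖ ≤ ‖f x - g x‖ := norm_le_pi_norm (f x - g x) j
    have h2 : ‖f x - g x‖ ≤ ε := Finset.le_sup' (fun x => ‖f x - g x‖) (Finset.mem_univ x)
    simp only [Pi.sub_apply, Real.norm_eq_abs] at h1
    calc f x j - g x j ≤ |f x j - g x j| := le_abs_self _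
      _ ≤ ε := h1.trans h2
  have hgf : ∀ x j, g x j - f x j ≤ ε := by
    intro x j
    have h1 : ‖(g x - f x) j‖ ≤ ‖g x - f x‖ := norm_le_pi_norm (g x - f x) j
    have h2 : ‖g x - f x‖ ≤ ε := by
      rw [norm_sub_rev]; exact Finset.le_sup' (fun x => ‖f x - g x‖) (Finset.mem_univ x)
    simp only [Pi.sub_apply, Real.norm_eq_abs] at h1
    calc g x j - f x j ≤ |g x j - f x j| := le_abs_self _
      _ ≤ ε := h1.trans h2
  -- finiteness
  have hfin : ∀ (h : X → (Fin M → ℝ)), (∀ x, h x ≤ u) →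
      volume (⋃ x, Set.Icc r (h x)) ≠ ⊤ := by
    intro h hh
    refine ne_top_of_le_ne_top (IsCompact.measure_lt_top (isCompact_Icc (a := r) (b := u))).ne
      (measure_mono ?_)
    exact Set.iUnion_subset fun x => Set.Icc_subset_Icc le_rfl (hh x)
  have hSne : (∑ j : Fin M, ENNReal.ofReal (ε * ∏ k ∈ Finset.univ.erase j, (u k - r k))) ≠ ⊤ :=
    by simp [ENNReal.sum_eq_top]
  -- the real constant
  set C0 : ℝ := ∑ j : Fin M, ε * ∏ k ∈ Finset.univ.erase j, (u k - r k) with hC0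
  have hS : (∑ j : Fin M, ENNReal.ofReal (ε * ∏ k ∈ Finset.univ.erase j, (u k - r k))).toReal
      = C0 := by
    rw [hC0, ENNReal.toReal_sum (by simp)]
    refine Finset.sum_congr rfl fun j _ => ?_
    exact ENNReal.toReal_ofReal (mul_nonneg hε
      (Finset.prod_nonneg fun k _ => sub_nonneg.2 (hru' k)))
  have onesided : ∀ (p q : X → (Fin M → ℝ)), (∀ x, r ≤ p x ∧ p x ≤ u) →
      (∀ x, r ≤ q x ∧ q x ≤ u) → (∀ x j, p x j - q x j ≤ ε) →
      (volume (⋃ x, Set.Icc r (p x))).toReal ≤ (volume (⋃ x, Set.Icc r (q x))).toReal + C0 := by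
    intro p q hp hq hpq
    have key := hv_key r u hru' ε hε p q (fun x => (hp x).2) (fun x => (hq x).1) hpq
    have h1 : (volume (⋃ x, Set.Icc r (p x))).toReal ≤
        (volume (⋃ x, Set.Icc r (q x)) +
          ∑ j : Fin M, ENNReal.ofReal (ε * ∏ k ∈ Finset.univ.erase j, (u k - r k))).toReal := by
      refine ENNReal.toReal_mono ?_ key
      exact ENNReal.add_ne_top.2 ⟨hfin q (fun x => (hq x).2), hSne⟩
    rwa [ENNReal.toReal_add (hfin q (fun x => (hq x).2)) hSne, hS] at h1
  have h1 := onesided f g hf hg hfg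
  have h2 := onesided g f hg hf hgf
  rw [hv_eq r f (fun x => (hf x).1), hv_eq r g (fun x => (hg x).1)]
  have hC0le : C0 ≤ (M : ℝ) * (∏ j, (u j - r j)) / m * ε := by
    have hstep : ∀ j : Fin M, ε * ∏ k ∈ Finset.univ.erase j, (u k - r k) ≤
        (∏ j, (u j - r j)) / m * ε := by
      intro j
      have hpnn : (0 : ℝ) ≤ ∏ k ∈ Finset.univ.erase j, (u k - r k) :=
        Finset.prod_nonneg fun k _ => sub_nonneg.2 (hru' k)
      have hprod : (∏ k, (u k - r k)) = (∏ k ∈ Finset.univ.erase j, (u k - r k)) * (u j - r j) :=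
        (Finset.prod_erase_mul _ _ (Finset.mem_univ j)).symm
      have hmj : m ≤ u j - r j := Finset.inf'_le _ (Finset.mem_univ j)
      have hkey : ∏ k ∈ Finset.univ.erase j, (u k - r k) ≤ (∏ k, (u k - r k)) / m := by
        rw [le_div_iff₀ hm, hprod]
        exact mul_le_mul_of_nonneg_left hmj hpnn
      calc ε * ∏ k ∈ Finset.univ.erase j, (u k - r k)
          ≤ ε * ((∏ k, (u k - r k)) / m) := mul_le_mul_of_nonneg_left hkey hε
        _ = (∏ j, (u j - r j)) / m * ε := mul_comm _ _
    calc C0 ≤ ∑ _j : Fin M, (∏ j, (u j - r j)) / m * ε :=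
        Finset.sum_le_sum fun j _ => hstep j
      _ = (M : ℝ) * ((∏ j, (u j - r j)) / m * ε) := by
          rw [Finset.sum_const, Finset.card_univ, Fintype.card_fin, nsmul_eq_mul]
      _ = (M : ℝ) * (∏ j, (u j - r j)) / m * ε := by ring
  rw [abs_sub_le_iff]
  constructor <;> linarith
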